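/- From the monotonicity U_p(t) ≥ lim_{τ→0⁺} U_p(τ) = Cap(Ω)^p (n-2)^p |𝕊^{n-1}| and the L^p bound ‖D(log u)/(n-2)‖_{L^p({u=t})} ≤ ‖H/(n-1)‖_{L^p({u=t})}, deduce for t = 1 the geometric inequality (|𝕊^{n-1}|/|∂Ω|)^{1/p} ≤ Cap(Ω)^{(p-(n-1))/(p(n-2))} · ( ⨍_{∂Ω} |H/(n-1)|^p dσ )^{1/p}, for every p ≥ 2 - 1/(n-1). -/

import Mathlib

open Real

/-- let `S = |𝕊^{n-1}|`, `A = |∂Ω|`, `c = Cap(Ω)`,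
`IP = ∫_{∂Ω} |Du|^p dσ` and `IH = ∫_{∂Ω} |H/(n-1)|^p dσ` (so that `IH/A` is the average
`⨍_{∂Ω} |H/(n-1)|^p dσ`).  From the monotonicity bound at `t = 1`,
`Cap^p (n-2)^p S ≤ Cap^{(p-1)(n-1)/(n-2)} IP` (i.e. `U_p(1) ≥ lim_{τ→0⁺} U_p(τ)`),
and from the `L^p` bound `IP^{1/p}/(n-2) ≤ IH^{1/p}` (using `|Du| = |D log u|` on `∂Ω`),
one deduces `(S/A)^{1/p} ≤ Cap^{(p-(n-1))/(p(n-2))} (IH/A)^{1/p}`, for every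
`p ≥ 2 - 1/(n-1)`. -/
theorem capacity_lp_geometric (n : ℕ) (hn : 3 ≤ n) (p : ℝ)
    (hp : 2 - 1 / ((n : ℝ) - 1) ≤ p)
    (S A c IP IH : ℝ) (hS : 0 < S) (hA : 0 < A) (hc : 0 < c)
    (hIP : 0 ≤ IP) (hIH : 0 ≤ IH)
    (hmono : c ^ p * ((n : ℝ) - 2) ^ p * S ≤ c ^ ((p - 1) * ((n : ℝ) - 1) / ((n : ℝ) - 2)) * IP)
    (hlp : IP ^ (1 / p) / ((n : ℝ) - 2) ≤ IH ^ (1 / p)) :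
    (S / A) ^ (1 / p) ≤ c ^ ((p - ((n : ℝ) - 1)) / (p * ((n : ℝ) - 2))) * (IH / A) ^ (1 / p) := by
  have h3 : (3:ℝ) ≤ (n:ℝ) := by exact_mod_cast hn
  have hn2p : (0:ℝ) < (n:ℝ) - 2 := by linarith
  have hp0 : 0 < p := by
    have h1 : 1 / ((n:ℝ) - 1) ≤ 1 := by
      rw [div_le_one (by linarith)]; linarith
    linarith
  set e : ℝ := (p - ((n:ℝ) - 1)) / (p * ((n:ℝ) - 2)) with he
  have hep : e * p = (p - ((n:ℝ) - 1)) / ((n:ℝ) - 2) := by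
    rw [he, div_mul_eq_mul_div, div_eq_div_iff (mul_pos hp0 hn2p).ne' hn2p.ne']
    ring
  have hsplit : c ^ ((p - 1) * ((n : ℝ) - 1) / ((n : ℝ) - 2)) = c ^ (e * p) * c ^ p := by
    rw [← Real.rpow_add hc, hep]
    congr 1
    field_simp
    ring
  have hcp : (0:ℝ) < c ^ p := Real.rpow_pos_of_pos hc p
  have hnp : (0:ℝ) < ((n:ℝ) - 2) ^ p := Real.rpow_pos_of_pos hn2p p
  have hce : (0:ℝ) < c ^ (e * p) := Real.rpow_pos_of_pos hc _
  have key : S ≤ c ^ (e * p) * (IP / ((n:ℝ) - 2) ^ p) := by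
    rw [hsplit] at hmono
    rw [mul_div_assoc', le_div_iff₀ hnp]
    nlinarith [hmono]
  -- take rpow (1/p)
  have hSr : S ^ (1/p) ≤ (c ^ (e * p) * (IP / ((n:ℝ) - 2) ^ p)) ^ (1/p) :=
    Real.rpow_le_rpow hS.le key (by positivity)
  have hrw : (c ^ (e * p) * (IP / ((n:ℝ) - 2) ^ p)) ^ (1/p)
      = c ^ e * (IP ^ (1/p) / ((n:ℝ) - 2)) := by
    rw [Real.mul_rpow hce.le (by positivity), Real.div_rpow hIP hnp.le,
      ← Real.rpow_mul hc.le, ← Real.rpow_mul hn2p.le, mul_one_div, mul_div_assoc,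
      div_self hp0.ne', mul_one, mul_one_div, div_self hp0.ne',
      Real.rpow_one]
  have hSr2 : S ^ (1/p) ≤ c ^ e * IH ^ (1/p) := by
    calc S ^ (1/p) ≤ c ^ e * (IP ^ (1/p) / ((n:ℝ) - 2)) := by rw [← hrw]; exact hSr
    _ ≤ c ^ e * IH ^ (1/p) :=
      mul_le_mul_of_nonneg_left hlp (Real.rpow_pos_of_pos hc e).le
  have hAr : (0:ℝ) < A ^ (1/p) := Real.rpow_pos_of_pos hA _
  rw [Real.div_rpow hS.le hA.le, Real.div_rpow hIH hA.le, div_le_iff₀ hAr,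
    mul_assoc, div_mul_cancel₀ _ hAr.ne']
  exact hSr2
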